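/- Let x > 0 be real and let n ≥ m ≥ 1 be natural numbers. With a_k = Σ_{j=0}^k x^j, b_k = Σ_{j=1}^k j x^j, c_k = Σ_{j=1}^k j² x^j, the quantities r₁ = (a_n + a_m) c_n − b_n² and r₂ = (a_n + a_m) c_m − b_m² satisfy r₁ r₂ ≥ (b_n b_m)². -/

import Mathlib

open Finset

/-- `aP k x = ∑_{j=0}^k x^j` -/
noncomputable def aP (k : ℕ) (x : ℝ) : ℝ := ∑ j ∈ range (k + 1), x ^ j

/-- `bP k x = ∑_{j=1}^k j x^j` -/
noncomputable def bP (k : ℕ) (x : ℝ) : ℝ := ∑ j ∈ range (k + 1), (j : ℝ) * x ^ j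

/-- `cP k x = ∑_{j=1}^k j² x^j` -/
noncomputable def cP (k : ℕ) (x : ℝ) : ℝ := ∑ j ∈ range (k + 1), (j : ℝ) ^ 2 * x ^ j

lemma aP_nonneg (k : ℕ) {x : ℝ} (hx : 0 ≤ x) : 0 ≤ aP k x :=
  Finset.sum_nonneg fun j _ => pow_nonneg hx j

lemma bP_nonneg (k : ℕ) {x : ℝ} (hx : 0 ≤ x) : 0 ≤ bP k x :=
  Finset.sum_nonneg fun j _ => mul_nonneg (Nat.cast_nonneg j) (pow_nonneg hx j)

lemma cP_nonneg (k : ℕ) {x : ℝ} (hx : 0 ≤ x) : 0 ≤ cP k x :=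
  Finset.sum_nonneg fun j _ => mul_nonneg (by positivity) (pow_nonneg hx j)

lemma cauchy_abc (k : ℕ) {x : ℝ} (hx : 0 ≤ x) : bP k x ^ 2 ≤ aP k x * cP k x := by
  have key := Finset.sum_mul_sq_le_sq_mul_sq (range (k + 1))
      (fun j => Real.sqrt (x ^ j)) (fun j => (j : ℝ) * Real.sqrt (x ^ j))
  have e1 : ∀ j ∈ range (k + 1),
      Real.sqrt (x ^ j) * ((j : ℝ) * Real.sqrt (x ^ j)) = (j : ℝ) * x ^ j := by
    intro j _
    rw [mul_left_comm, Real.mul_self_sqrt (pow_nonneg hx j)]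
  have e2 : ∀ j ∈ range (k + 1), Real.sqrt (x ^ j) ^ 2 = x ^ j := by
    intro j _; exact Real.sq_sqrt (pow_nonneg hx j)
  have e3 : ∀ j ∈ range (k + 1),
      ((j : ℝ) * Real.sqrt (x ^ j)) ^ 2 = (j : ℝ) ^ 2 * x ^ j := by
    intro j _; rw [mul_pow, Real.sq_sqrt (pow_nonneg hx j)]
  rw [Finset.sum_congr rfl e1, Finset.sum_congr rfl e2, Finset.sum_congr rfl e3] at key
  simpa [aP, bP, cP] using key

/-- `r₁ r₂ ≥ r₁₂²` for the naive model:
`((aₙ+aₘ)cₙ − bₙ²)((aₙ+aₘ)cₘ − bₘ²) ≥ (bₙbₘ)²`. -/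
theorem r1_mul_r2_ge_r12_sq (x : ℝ) (hx : 0 < x) (n m : ℕ) (hm : 1 ≤ m) (hnm : m ≤ n) :
    (bP n x * bP m x) ^ 2 ≤
      ((aP n x + aP m x) * cP n x - bP n x ^ 2) *
        ((aP n x + aP m x) * cP m x - bP m x ^ 2) := by
  have hx' := hx.le
  have cn := cauchy_abc n hx'
  have cm := cauchy_abc m hx'
  have h1 : aP m x * cP n x ≤ (aP n x + aP m x) * cP n x - bP n x ^ 2 := by nlinarith
  have h2 : aP n x * cP m x ≤ (aP n x + aP m x) * cP m x - bP m x ^ 2 := by nlinarith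
  have hmn1 : 0 ≤ aP m x * cP n x := mul_nonneg (aP_nonneg m hx') (cP_nonneg n hx')
  have hmn2 : 0 ≤ aP n x * cP m x := mul_nonneg (aP_nonneg n hx') (cP_nonneg m hx')
  have hb : (bP n x * bP m x) ^ 2 ≤ (aP m x * cP n x) * (aP n x * cP m x) := by
    have := mul_le_mul cn cm (sq_nonneg _) (mul_nonneg (aP_nonneg n hx') (cP_nonneg n hx'))
    nlinarith
  calc (bP n x * bP m x) ^ 2 ≤ (aP m x * cP n x) * (aP n x * cP m x) := hb
    _ ≤ _ := mul_le_mul h1 h2 hmn2 (le_trans hmn1 h1)
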